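/- If γ₁ ⊕ γ₂ is closed, x ∈ nodes (γ₁ ⊕ γ₂), and nodes γ₁ = reach (γ₁ ⊕ γ₂) x, then γ₁ is closed, x ∈ nodes γ₁, and nodes γ₁ = reach γ₁ x. -/
import Mathlib


open scoped Classical

/-- A partial graph of type `T`: a finite partial map from nodes (natural
numbers, undefined on `0 = null`) to pairs of a value and an adjacency list. -/
structure PGraph (T : Type) where
  f : ℕ → Option (T × List ℕ)
  dom : Finset ℕ
  mem_dom : ∀ x, x ∈ dom ↔ (f x).isSome
  null_not_mem : f 0 = none

namespace PGraph

variable {T T' : Type}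

def empty : PGraph T :=
  ⟨fun _ => none, ∅, by intro x; simp, rfl⟩

/-- Total (left-biased) union; meaningful when domains are disjoint. -/
def union (γ₁ γ₂ : PGraph T) : PGraph T where
  f := fun x => match γ₁.f x with
    | some v => some v
    | none => γ₂.f x
  dom := γ₁.dom ∪ γ₂.dom
  mem_dom := by
    intro x
    rw [Finset.mem_union, γ₁.mem_dom, γ₂.mem_dom]
    cases h : γ₁.f x <;> simp [h]
  null_not_mem := by simp [γ₁.null_not_mem, γ₂.null_not_mem]

/-- The partial PCM join: defined iff the domains are disjoint. -/
noncomputable def join (γ₁ γ₂ : PGraph T) : Option (PGraph T) :=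
  if Disjoint γ₁.dom γ₂.dom then some (union γ₁ γ₂) else none

/-- Filter (restriction) of a graph to a set of nodes. -/
noncomputable def restrict (γ : PGraph T) (S : Set ℕ) : PGraph T where
  f := fun x => if x ∈ S then γ.f x else none
  dom := γ.dom.filter (fun x => x ∈ S)
  mem_dom := by
    intro x
    rw [Finset.mem_filter, γ.mem_dom]
    by_cases h : x ∈ S <;> simp [h]
  null_not_mem := by simp [γ.null_not_mem]

/-- Map combinator: apply `g` pointwise at each node. -/
def mapNode (g : ℕ → T × List ℕ → T' × List ℕ) (γ : PGraph T) : PGraph T' where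
  f := fun x => (γ.f x).map (g x)
  dom := γ.dom
  mem_dom := by intro x; rw [γ.mem_dom]; cases h : γ.f x <;> simp [h]
  null_not_mem := by simp [γ.null_not_mem]

/-- Erasure: replace every value with the unit value, keeping adjacency. -/
def erasure (γ : PGraph T) : PGraph Unit :=
  mapNode (fun _ p => ((), p.2)) γ

/-- Adjacency list of a node. -/
def adj (γ : PGraph T) (x : ℕ) : List ℕ :=
  ((γ.f x).map Prod.snd).getD []

/-- The value stored at a node, if any. -/
def val? (γ : PGraph T) (x : ℕ) : Option T :=
  (γ.f x).map Prod.fst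

/-- Sinks: nodes appearing in some adjacency list. -/
def sinks (γ : PGraph T) : Set ℕ :=
  ⋃ x ∈ γ.dom, {y | y ∈ γ.adj x}

/-- A graph is closed if it has no dangling edges. -/
def Closed (γ : PGraph T) : Prop :=
  sinks γ ⊆ insert 0 (↑γ.dom : Set ℕ)

/-- Remove a node (and its outgoing edges) from the graph. -/
def erase (γ : PGraph T) (y : ℕ) : PGraph T where
  f := fun x => if x = y then none else γ.f x
  dom := γ.dom.erase y
  mem_dom := by
    intro x
    rw [Finset.mem_erase, γ.mem_dom]
    by_cases h : x = y <;> simp [h]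
  null_not_mem := by
    by_cases h : (0 : ℕ) = y <;> simp [h, γ.null_not_mem]

/-- Set of nodes reachable from `x` in `γ`. -/
def reach (γ : PGraph T) (x : ℕ) : Set ℕ :=
  if h : x ∈ γ.dom then
    {x} ∪ ⋃ y ∈ γ.adj x, reach (γ.erase x) y
  else ∅
termination_by γ.dom.card
decreasing_by simpa [PGraph.erase] using Finset.card_erase_lt_of_mem h

/-- Summits of a path starting at `x`. -/
def summit (γ : PGraph T) (x : ℕ) : Set ℕ :=
  if h : x ∈ γ.dom then ⋃ y ∈ γ.adj x, summit (γ.erase x) y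
  else {x}
termination_by γ.dom.card
decreasing_by simpa [PGraph.erase] using Finset.card_erase_lt_of_mem h

/-- All summits of a graph. -/
def summits (γ : PGraph T) : Set ℕ :=
  ⋃ x ∈ γ.dom, summit γ x

/-- Nodes that lie on a cycle (reachable from one of their own children). -/
def cycles (γ : PGraph T) : Set ℕ :=
  {x | x ∈ ⋃ y ∈ γ.adj x, reach γ y}

/-- Targets of dangling edges. -/
def dangls (γ : PGraph T) : Set ℕ :=
  sinks γ \ ↑γ.dom

/-- Nodes forming cycles of size one. -/
def loops (γ : PGraph T) : Set ℕ :=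
  {x | x ∈ γ.dom ∧ x ∈ γ.adj x}

/-- Filter by contents: keep nodes whose value lies in `V`. -/
noncomputable def filterVal (γ : PGraph T) (V : Set T) : PGraph T :=
  γ.restrict {x | ∃ v ∈ V, γ.val? x = some v}

/-- Update the entry at node `x` (if present). -/
def update (γ : PGraph T) (x : ℕ) (p : T × List ℕ) : PGraph T where
  f := fun y => if y = x then (γ.f y).map (fun _ => p) else γ.f y
  dom := γ.dom
  mem_dom := by
    intro y
    rw [γ.mem_dom]
    by_cases h : y = x
    · subst h; cases hf : γ.f y <;> simp [hf]
    · simp [h]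
  null_not_mem := by
    by_cases h : (0 : ℕ) = x
    · subst h; simp [γ.null_not_mem]
    · simp [h, γ.null_not_mem]

/-- Binary graphs: every adjacency list has exactly two elements. -/
def Binary (γ : PGraph T) : Prop :=
  ∀ x p, γ.f x = some p → p.2.length = 2

/-- Marks of the Schorr-Waite algorithm. -/
inductive Mark | O | L | R | X
deriving DecidableEq

/-- The `if-mark` transformation on a node's mark and children. -/
def ifMark (f : ℕ → ℕ) (x : ℕ) : Mark × List ℕ → Unit × List ℕ
  | (Mark.L, [_, r]) => ((), [f x, r])
  | (Mark.R, [l, _]) => ((), [l, f x])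
  | (_, l) => ((), l)

end PGraph

namespace PGAux

open PGraph
variable {T : Type}

theorem erase_f' (γ : PGraph T) (x z : ℕ) :
    (γ.erase x).f z = if z = x then none else γ.f z := rfl

theorem erase_adj (γ : PGraph T) (x z : ℕ) (h : z ≠ x) :
    (γ.erase x).adj z = γ.adj z := by
  simp [adj, erase, h]

theorem reach_subset_dom (γ : PGraph T) (x : ℕ) : γ.reach x ⊆ ↑γ.dom := by
  rw [reach]
  split
  · rename_i h
    intro z hz
    rcases hz with hz | hz
    · simp_all
    · simp only [Set.mem_iUnion] at hz
      obtain ⟨y, hy, hz⟩ := hz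
      have := reach_subset_dom (γ.erase x) y hz
      simp only [erase, Finset.coe_erase, Set.mem_diff] at this
      exact this.1
  · simp
termination_by γ.dom.card
decreasing_by simpa [PGraph.erase] using Finset.card_erase_lt_of_mem (by assumption)

theorem mem_reach_self (γ : PGraph T) (x : ℕ) (h : x ∈ γ.dom) : x ∈ γ.reach x := by
  rw [reach]; simp [h]

theorem reach_succ (γ : PGraph T) (x z y : ℕ) (hz : z ∈ γ.reach x)
    (hy : y ∈ γ.adj z) (hyd : y ∈ γ.dom) : y ∈ γ.reach x := by
  rw [reach] at hz ⊢
  split at hz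
  case isTrue h =>
    rw [dif_pos h]
    rw [Set.mem_union, Set.mem_singleton_iff] at hz
    by_cases hyx : y = x
    · exact Or.inl hyx
    · have hyd2 : y ∈ (γ.erase x).dom := by
        simp [erase, Finset.mem_erase, hyx, hyd]
      rcases hz with hzx | hz
      · rw [hzx] at hy
        exact Or.inr (Set.mem_biUnion hy (mem_reach_self _ y hyd2))
      · simp only [Set.mem_iUnion] at hz
        obtain ⟨y', hy', hz⟩ := hz
        have hzd : z ∈ (γ.erase x).dom := by
          exact_mod_cast reach_subset_dom _ _ hz
        have hzx : z ≠ x := by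
          simp only [erase, Finset.mem_erase] at hzd
          exact hzd.1
        have hy2 : y ∈ (γ.erase x).adj z := by
          rw [erase_adj _ _ _ hzx]; exact hy
        exact Or.inr
          (Set.mem_biUnion hy' (reach_succ (γ.erase x) y' z y hz hy2 hyd2))
  case isFalse h =>
    exact absurd hz (Set.notMem_empty z)
termination_by γ.dom.card
decreasing_by simpa [PGraph.erase] using Finset.card_erase_lt_of_mem (by assumption)

theorem reach_mono_A (γ' γ : PGraph T) (x : ℕ) (hsub : γ'.dom ⊆ γ.dom)
    (hf : ∀ z ∈ γ'.dom, γ'.f z = γ.f z) : γ'.reach x ⊆ γ.reach x := by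
  intro z hz
  rw [reach] at hz ⊢
  split at hz
  case isTrue h =>
    have hxg : x ∈ γ.dom := hsub h
    have hadj : γ'.adj x = γ.adj x := by simp [adj, hf x h]
    rw [dif_pos hxg]
    rw [Set.mem_union, Set.mem_singleton_iff] at hz
    rcases hz with hz | hz
    · exact Or.inl hz
    · simp only [Set.mem_iUnion] at hz
      obtain ⟨y, hy, hz⟩ := hz
      have ih : (γ'.erase x).reach y ⊆ (γ.erase x).reach y := by
        apply reach_mono_A
        · intro a ha
          simp only [erase, Finset.mem_erase] at ha ⊢
          exact ⟨ha.1, hsub ha.2⟩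
        · intro a ha
          simp only [erase, Finset.mem_erase] at ha
          simp [erase_f', ha.1, hf a ha.2]
      rw [hadj] at hy
      exact Or.inr (Set.mem_biUnion hy (ih hz))
  case isFalse h =>
    exact absurd hz (Set.notMem_empty z)
termination_by γ'.dom.card
decreasing_by simpa [PGraph.erase] using Finset.card_erase_lt_of_mem (by assumption)

theorem reach_mono_B (γ γ' : PGraph T) (x : ℕ)
    (hf : ∀ z ∈ γ.reach x, γ'.f z = γ.f z)
    (hsub : γ.reach x ⊆ ↑γ'.dom) : γ.reach x ⊆ γ'.reach x := by
  by_cases h : x ∈ γ.dom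
  · have hx' : x ∈ γ.reach x := mem_reach_self γ x h
    have hxd' : x ∈ γ'.dom := by exact_mod_cast hsub hx'
    have hadj : γ'.adj x = γ.adj x := by simp [adj, hf x hx']
    intro z hz
    rw [reach] at hz
    rw [reach, dif_pos hxd']
    rw [dif_pos h, Set.mem_union, Set.mem_singleton_iff] at hz
    rcases hz with hz | hz
    · exact Or.inl hz
    · simp only [Set.mem_iUnion] at hz
      obtain ⟨y, hy, hz⟩ := hz
      have hmem : ∀ a ∈ (γ.erase x).reach y, a ∈ γ.reach x := by
        intro a ha
        rw [reach, dif_pos h]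
        exact Or.inr (Set.mem_biUnion hy ha)
      have hsub1 : (γ.erase x).reach y ⊆ ↑(γ'.erase x).dom := by
        intro a ha
        have hax : a ∈ (γ.erase x).dom := by
          exact_mod_cast reach_subset_dom _ _ ha
        simp only [erase, Finset.mem_erase] at hax
        have haa : a ∈ (↑γ'.dom : Set ℕ) := hsub (hmem a ha)
        simp only [erase, Finset.coe_erase, Set.mem_diff, Set.mem_singleton_iff]
        exact ⟨haa, hax.1⟩
      have hf1 : ∀ a ∈ (γ.erase x).reach y, (γ'.erase x).f a = (γ.erase x).f a := by
        intro a ha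
        have hax : a ∈ (γ.erase x).dom := by
          exact_mod_cast reach_subset_dom _ _ ha
        simp only [erase, Finset.mem_erase] at hax
        simp [erase_f', hax.1, hf a (hmem a ha)]
      have ih := reach_mono_B (γ.erase x) (γ'.erase x) y hf1 hsub1
      rw [hadj]
      exact Or.inr (Set.mem_biUnion hy (ih hz))
  · intro z hz
    rw [reach, dif_neg h] at hz
    exact absurd hz (Set.notMem_empty z)
termination_by γ.dom.card
decreasing_by simpa [PGraph.erase] using Finset.card_erase_lt_of_mem (by assumption)

end PGAux

open PGAux in
/-- If `γ₁ ⊕ γ₂` is closed, `x` is a node of it, and `γ₁` is exactly the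
subgraph reachable from `x`, then `γ₁` is closed, contains `x`, and its nodes
are those reachable from `x` within `γ₁`. -/
theorem closed_reachable_component (T : Type) (γ₁ γ₂ : PGraph T) (x : ℕ)
    (hd : Disjoint γ₁.dom γ₂.dom)
    (hc : (PGraph.union γ₁ γ₂).Closed)
    (hx : x ∈ (PGraph.union γ₁ γ₂).dom)
    (hn : (↑γ₁.dom : Set ℕ) = (PGraph.union γ₁ γ₂).reach x) :
    γ₁.Closed ∧ x ∈ γ₁.dom ∧ (↑γ₁.dom : Set ℕ) = γ₁.reach x := by
  have hf1 : ∀ z ∈ γ₁.dom, γ₁.f z = (PGraph.union γ₁ γ₂).f z := by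
    intro z hz
    have hs := (γ₁.mem_dom z).1 hz
    cases h : γ₁.f z with
    | none => rw [h] at hs; simp at hs
    | some v => simp [PGraph.union, h]
  have hdomsub : γ₁.dom ⊆ (PGraph.union γ₁ γ₂).dom := by
    intro z hz; simp [PGraph.union, hz]
  have hx1 : x ∈ γ₁.dom := by
    have := PGAux.mem_reach_self _ x hx
    rw [← hn] at this
    exact_mod_cast this
  have hreach : (↑γ₁.dom : Set ℕ) = γ₁.reach x := by
    apply Set.Subset.antisymm
    · rw [hn]
      apply PGAux.reach_mono_B
      · intro z hz
        rw [← hn] at hz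
        exact hf1 z (by exact_mod_cast hz)
      · rw [← hn]
    · have := PGAux.reach_mono_A γ₁ (PGraph.union γ₁ γ₂) x hdomsub hf1
      rw [hn]
      exact this
  refine ⟨?_, hx1, hreach⟩
  intro y hy
  simp only [PGraph.sinks, Set.mem_iUnion, Set.mem_setOf_eq] at hy
  obtain ⟨z, hz, hadj⟩ := hy
  have hadj' : y ∈ (PGraph.union γ₁ γ₂).adj z := by
    simp only [PGraph.adj]; rw [← hf1 z hz]; exact hadj
  have hyu : y ∈ (PGraph.union γ₁ γ₂).sinks := by
    simp only [PGraph.sinks, Set.mem_iUnion, Set.mem_setOf_eq]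
    exact ⟨z, hdomsub hz, hadj'⟩
  have := hc hyu
  rcases this with h0 | hmem
  · exact Or.inl h0
  · right
    have hzr : z ∈ (PGraph.union γ₁ γ₂).reach x := by rw [← hn]; exact_mod_cast hz
    have := PGAux.reach_succ _ x z y hzr hadj' (by exact_mod_cast hmem)
    rw [← hn] at this
    exact this
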